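/- Let A, B : ℂ → ℂ be differentiable functions. For a point p = (τ, z₁, z₂) ∈ ℂ³, let Θ(p) : ℂ³×ℂ³ → ℂ³ be the symmetric bilinear map with Θ(p)(e_τ, e_τ) = A(τ)·e₁ + B(τ)·e₂ and Θ(p)(u,v) = 0 whenever u or v lies in the span of {e₁, e₂}, where e_τ, e₁, e₂ are the coordinate directions of τ, z₁, z₂. Then the curvature of the connection ∇₀ + Θ, namely R(p)(X,Y)Z := (∂_X q ↦ Θ(q)(Y,Z))(p) − (∂_Y q ↦ Θ(q)(X,Z))(p) + Θ(p)(X, Θ(p)(Y,Z)) − Θ(p)(Y, Θ(p)(X,Z)) (where ∂_X denotes the directional derivative at p in direction X of the indicated ℂ³-valued map), vanishes identically: R(p)(X,Y)Z = 0 for all p ∈ ℂ³ and all X,Y,Z ∈ ℂ³. (This is the flatness of the affine connections ∇^{A,B} representing holomorphic projective connections on Kuga–Shimura projective threefolds.) -/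
import Mathlib


noncomputable section

/-- Coordinates on `ℂ³`: index `0` is `τ`, index `1` is `z₁`, index `2` is `z₂`;
`eτ = Pi.single 0 1`, `e₁ = Pi.single 1 1`, `e₂ = Pi.single 2 1`.
Let `A, B : ℂ → ℂ` be differentiable and let `Θ(p)` be the symmetric bilinear map with
`Θ(p)(eτ,eτ) = A(τ)•e₁ + B(τ)•e₂` and `Θ(p)(u,v) = 0` whenever `u` or `v` lies in
`span{e₁,e₂}`. Then the curvature of `∇₀ + Θ`,
`R(p)(X,Y)Z = ∂_X(Θ(·)(Y,Z))(p) − ∂_Y(Θ(·)(X,Z))(p) + Θ(p)(X,Θ(p)(Y,Z)) − Θ(p)(Y,Θ(p)(X,Z))`,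
vanishes identically. -/
theorem stmt_14 (A B : ℂ → ℂ) (hA : Differentiable ℂ A) (hB : Differentiable ℂ B)
    (Θ : (Fin 3 → ℂ) → ((Fin 3 → ℂ) →ₗ[ℂ] (Fin 3 → ℂ) →ₗ[ℂ] (Fin 3 → ℂ)))
    (hττ : ∀ p : Fin 3 → ℂ,
      Θ p (Pi.single 0 1) (Pi.single 0 1)
        = A (p 0) • (Pi.single 1 1 : Fin 3 → ℂ) + B (p 0) • (Pi.single 2 1 : Fin 3 → ℂ))
    (hzero : ∀ (p u v : Fin 3 → ℂ),
      (u ∈ Submodule.span ℂ {(Pi.single 1 1 : Fin 3 → ℂ), (Pi.single 2 1 : Fin 3 → ℂ)} ∨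
       v ∈ Submodule.span ℂ {(Pi.single 1 1 : Fin 3 → ℂ), (Pi.single 2 1 : Fin 3 → ℂ)}) →
      Θ p u v = 0) :
    ∀ (p X Y Z : Fin 3 → ℂ),
      fderiv ℂ (fun q => Θ q Y Z) p X - fderiv ℂ (fun q => Θ q X Z) p Y
        + Θ p X (Θ p Y Z) - Θ p Y (Θ p X Z) = 0 := by
  classical
  set e1 : Fin 3 → ℂ := Pi.single 1 1 with he1
  set e2 : Fin 3 → ℂ := Pi.single 2 1 with he2
  have h1 : e1 ∈ Submodule.span ℂ {e1, e2} := Submodule.subset_span (by simp)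
  have h2 : e2 ∈ Submodule.span ℂ {e1, e2} := Submodule.subset_span (by simp)
  have hdecomp : ∀ u : Fin 3 → ℂ,
      u = u 0 • (Pi.single 0 1 : Fin 3 → ℂ) + (u 1 • e1 + u 2 • e2) := by
    intro u; funext i; fin_cases i <;> simp [he1, he2]
  have hmem : ∀ u : Fin 3 → ℂ, (u 1 • e1 + u 2 • e2) ∈ Submodule.span ℂ {e1, e2} :=
    fun u => Submodule.add_mem _ (Submodule.smul_mem _ _ h1) (Submodule.smul_mem _ _ h2)
  have key : ∀ p u v : Fin 3 → ℂ,
      Θ p u v = (u 0 * v 0) • (A (p 0) • e1 + B (p 0) • e2) := by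
    intro p u v
    have zl1 : ∀ w : Fin 3 → ℂ, Θ p e1 w = 0 := fun w => hzero p e1 w (Or.inl h1)
    have zl2 : ∀ w : Fin 3 → ℂ, Θ p e2 w = 0 := fun w => hzero p e2 w (Or.inl h2)
    have zr1 : ∀ w : Fin 3 → ℂ, Θ p w e1 = 0 := fun w => hzero p w e1 (Or.inr h1)
    have zr2 : ∀ w : Fin 3 → ℂ, Θ p w e2 = 0 := fun w => hzero p w e2 (Or.inr h2)
    conv_lhs => rw [hdecomp u, hdecomp v]
    simp only [map_add, map_smul, LinearMap.add_apply, LinearMap.smul_apply, zl1, zl2, zr1, zr2,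
      LinearMap.zero_apply, Pi.zero_apply, smul_zero, add_zero, zero_add, hττ p, smul_smul]
    rw [mul_comm]
  have hspan : ∀ p u v : Fin 3 → ℂ, Θ p u v ∈ Submodule.span ℂ {e1, e2} := by
    intro p u v
    rw [key]
    exact Submodule.smul_mem _ _
      (Submodule.add_mem _ (Submodule.smul_mem _ _ h1) (Submodule.smul_mem _ _ h2))
  intro p X Y Z
  have hq1 : Θ p X (Θ p Y Z) = 0 := hzero p _ _ (Or.inr (hspan p Y Z))
  have hq2 : Θ p Y (Θ p X Z) = 0 := hzero p _ _ (Or.inr (hspan p X Z))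
  have hproj : HasFDerivAt (fun q : Fin 3 → ℂ => q 0)
      (ContinuousLinearMap.proj 0 : (Fin 3 → ℂ) →L[ℂ] ℂ) p :=
    (ContinuousLinearMap.proj 0 : (Fin 3 → ℂ) →L[ℂ] ℂ).hasFDerivAt
  have hAq : HasFDerivAt (fun q : Fin 3 → ℂ => A (q 0))
      (deriv A (p 0) • (ContinuousLinearMap.proj 0 : (Fin 3 → ℂ) →L[ℂ] ℂ)) p :=
    HasDerivAt.comp_hasFDerivAt p ((hA (p 0)).hasDerivAt) hproj
  have hBq : HasFDerivAt (fun q : Fin 3 → ℂ => B (q 0))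
      (deriv B (p 0) • (ContinuousLinearMap.proj 0 : (Fin 3 → ℂ) →L[ℂ] ℂ)) p :=
    HasDerivAt.comp_hasFDerivAt p ((hB (p 0)).hasDerivAt) hproj
  have hD : ∀ c : ℂ, HasFDerivAt (fun q : Fin 3 → ℂ => c • (A (q 0) • e1 + B (q 0) • e2))
      (c • (((deriv A (p 0) • (ContinuousLinearMap.proj 0 : (Fin 3 → ℂ) →L[ℂ] ℂ)).smulRight e1)
        + ((deriv B (p 0) • (ContinuousLinearMap.proj 0 : (Fin 3 → ℂ) →L[ℂ] ℂ)).smulRight e2))) p :=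
    fun c => ((hAq.smul_const e1).add (hBq.smul_const e2)).const_smul c
  have hf1 : fderiv ℂ (fun q => Θ q Y Z) p X
      = (Y 0 * Z 0) • ((deriv A (p 0) * X 0) • e1 + (deriv B (p 0) * X 0) • e2) := by
    have : (fun q => Θ q Y Z) = fun q : Fin 3 → ℂ =>
        (Y 0 * Z 0) • (A (q 0) • e1 + B (q 0) • e2) := funext fun q => key q Y Z
    rw [this, (hD (Y 0 * Z 0)).fderiv]
    simp [ContinuousLinearMap.smul_apply, ContinuousLinearMap.add_apply,
      ContinuousLinearMap.smulRight_apply, ContinuousLinearMap.proj_apply, smul_smul]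
  have hf2 : fderiv ℂ (fun q => Θ q X Z) p Y
      = (X 0 * Z 0) • ((deriv A (p 0) * Y 0) • e1 + (deriv B (p 0) * Y 0) • e2) := by
    have : (fun q => Θ q X Z) = fun q : Fin 3 → ℂ =>
        (X 0 * Z 0) • (A (q 0) • e1 + B (q 0) • e2) := funext fun q => key q X Z
    rw [this, (hD (X 0 * Z 0)).fderiv]
    simp [ContinuousLinearMap.smul_apply, ContinuousLinearMap.add_apply,
      ContinuousLinearMap.smulRight_apply, ContinuousLinearMap.proj_apply, smul_smul]
  rw [hf1, hf2, hq1, hq2]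
  simp only [smul_add, smul_smul]
  ring_nf
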